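/- Let G be a finite group, N ⊴ G, and B, C conjugacy classes of elements of N at distance at least 3 in Γ_G(N) with |B| < |C|. Then the subgroup ⟨BB⁻¹⟩ generated by all products x·y⁻¹ with x, y ∈ B is contained in ⟨CC⁻¹⟩, satisfies C·⟨BB⁻¹⟩ = C, and |⟨BB⁻¹⟩| divides |C|. -/

import Mathlib

open scoped Pointwise

/-- The `G`-conjugacy class of `b`, as a set. -/
def gclass {G : Type*} [Group G] (b : G) : Set G := {y | ∃ g : G, g * b * g⁻¹ = y}

open MulAction

private lemma gclass_eq_orbit {G : Type*} [Group G] (b : G) :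
    gclass b = orbit (ConjAct G) b := by
  ext y
  constructor
  · rintro ⟨g, rfl⟩
    exact ⟨ConjAct.toConjAct g, by simp [ConjAct.smul_def]⟩
  · rintro ⟨γ, rfl⟩
    exact ⟨ConjAct.ofConjAct γ, by simp [ConjAct.smul_def]⟩

private lemma gclass_card {G : Type*} [Group G] (b : G) :
    Nat.card (gclass b) = (stabilizer (ConjAct G) b).index := by
  rw [gclass_eq_orbit, Nat.card_coe_set_eq]
  exact (MulAction.index_stabilizer _ _).symm

private lemma gclass_conj {G : Type*} [Group G] {a w : G} (hw : w ∈ gclass a) (g : G) :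
    g * w * g⁻¹ ∈ gclass a := by
  obtain ⟨h, rfl⟩ := hw
  exact ⟨g * h, by group⟩

private lemma self_mem_gclass {G : Type*} [Group G] (a : G) : a ∈ gclass a :=
  ⟨1, by group⟩

theorem stmt3 {G : Type*} [Group G] [Finite G] (N : Subgroup G) (hN : N.Normal)
    (b c : G) (hb : b ∈ N) (hc : c ∈ N)
    (hbnc : 1 < Nat.card (gclass b)) (hcnc : 1 < Nat.card (gclass c))
    (hcop : Nat.Coprime (Nat.card (gclass b)) (Nat.card (gclass c)))
    (hlt : Nat.card (gclass b) < Nat.card (gclass c))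
    (hdist : ∀ d ∈ N, ¬ (¬ Nat.Coprime (Nat.card (gclass d)) (Nat.card (gclass b)) ∧
        ¬ Nat.Coprime (Nat.card (gclass d)) (Nat.card (gclass c)))) :
    Subgroup.closure (gclass b * (gclass b)⁻¹) ≤ Subgroup.closure (gclass c * (gclass c)⁻¹) ∧
    gclass c * ↑(Subgroup.closure (gclass b * (gclass b)⁻¹)) = gclass c ∧
    Nat.card (Subgroup.closure (gclass b * (gclass b)⁻¹)) ∣ Nat.card (gclass c) := by
  classical
  have hΓfin : Finite (ConjAct G) := Finite.of_equiv G ConjAct.toConjAct.toEquiv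
  set Hb : Subgroup (ConjAct G) := stabilizer (ConjAct G) b with hHb
  set Kc : Subgroup (ConjAct G) := stabilizer (ConjAct G) c with hKc
  have hcardB : Nat.card (gclass b) = Hb.index := gclass_card b
  have hcardC : Nat.card (gclass c) = Kc.index := gclass_card c
  have hidx0 : ∀ P : Subgroup (ConjAct G), P.index ≠ 0 :=
    fun P => Subgroup.index_ne_zero_of_finite
  have hBpos : 0 < Hb.index := Nat.pos_of_ne_zero (hidx0 Hb)
  have hCpos : 0 < Kc.index := Nat.pos_of_ne_zero (hidx0 Kc)
  -- index of the intersection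
  have hL : (Hb ⊓ Kc).index = Hb.index * Kc.index := by
    have hcop' : Nat.Coprime Hb.index Kc.index := by rwa [hcardB, hcardC] at hcop
    have h3 : Hb.index * Kc.index ∣ (Hb ⊓ Kc).index :=
      hcop'.mul_dvd_of_dvd_of_dvd (Subgroup.index_dvd_of_le inf_le_left)
        (Subgroup.index_dvd_of_le inf_le_right)
    exact Nat.le_antisymm Subgroup.index_inf_le
      (Nat.le_of_dvd (Nat.pos_of_ne_zero (hidx0 _)) h3)
  -- the orbit of c under Hb is all of gclass c
  have hstab : stabilizer Hb c = Kc.subgroupOf Hb := by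
    ext γ
    simp only [MulAction.mem_stabilizer_iff, Subgroup.mem_subgroupOf, hKc]
    rfl
  have horb : (orbit Hb c).ncard = Kc.index := by
    have h1 : (Kc.subgroupOf Hb).index = (orbit Hb c).ncard := by
      rw [← hstab]; exact MulAction.index_stabilizer _ _
    have h2 : Kc.relIndex Hb * Hb.index = Hb.index * Kc.index := by
      have h := Subgroup.relIndex_mul_index (inf_le_left : Hb ⊓ Kc ≤ Hb)
      rw [Subgroup.inf_relIndex_left] at h
      rw [h, hL]
    have h3 : Kc.relIndex Hb = Kc.index := by
      have h2' : Hb.index * Kc.relIndex Hb = Hb.index * Kc.index := by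
        rw [mul_comm Hb.index (Kc.relIndex Hb)]; exact h2
      exact Nat.eq_of_mul_eq_mul_left hBpos h2'
    rw [← h1]
    exact h3
  have horbsub : orbit Hb c ⊆ gclass c := by
    rintro z ⟨γ, rfl⟩
    exact ⟨ConjAct.ofConjAct (γ : ConjAct G), rfl⟩
  have horbeq : orbit Hb c = gclass c := by
    apply Set.eq_of_subset_of_ncard_le horbsub
    rw [horb, ← Nat.card_coe_set_eq, hcardC]
  -- C·{b} ⊆ gclass (c*b)
  have hCbD : gclass c * {b} ⊆ gclass (c * b) := by
    rintro w hw
    rw [Set.mul_singleton] at hw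
    obtain ⟨z, hz, rfl⟩ := hw
    rw [← horbeq] at hz
    obtain ⟨γ, rfl⟩ := hz
    set u : G := ConjAct.ofConjAct (γ : ConjAct G) with hu
    have hsm : (γ : Hb) • c = u * c * u⁻¹ := rfl
    have hγb : u * b * u⁻¹ = b := by
      have h' : (γ : ConjAct G) • b = b := γ.2
      rwa [ConjAct.smul_def] at h'
    have hub : u * b = b * u := mul_inv_eq_iff_eq_mul.mp hγb
    have hbu : b * u⁻¹ = u⁻¹ * b := by
      calc b * u⁻¹ = u⁻¹ * (u * b) * u⁻¹ := by group
        _ = u⁻¹ * (b * u) * u⁻¹ := by rw [hub]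
        _ = u⁻¹ * b := by group
    refine ⟨u, ?_⟩
    show u * (c * b) * u⁻¹ = (γ • c) * b
    rw [hsm]
    calc u * (c * b) * u⁻¹ = u * c * (b * u⁻¹) := by group
      _ = u * c * (u⁻¹ * b) := by rw [hbu]
      _ = u * c * u⁻¹ * b := by group
  -- card of gclass (c*b) divides |B|·|C|
  have hDdvd : Nat.card (gclass (c * b)) ∣ Hb.index * Kc.index := by
    rw [gclass_card (c * b), ← hL]
    apply Subgroup.index_dvd_of_le
    intro γ hγ
    obtain ⟨h1, h2⟩ := Subgroup.mem_inf.mp hγ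
    rw [hHb, MulAction.mem_stabilizer_iff, ConjAct.smul_def] at h1
    rw [hKc, MulAction.mem_stabilizer_iff, ConjAct.smul_def] at h2
    rw [MulAction.mem_stabilizer_iff, ConjAct.smul_def]
    calc ConjAct.ofConjAct γ * (c * b) * (ConjAct.ofConjAct γ)⁻¹
        = (ConjAct.ofConjAct γ * c * (ConjAct.ofConjAct γ)⁻¹) *
          (ConjAct.ofConjAct γ * b * (ConjAct.ofConjAct γ)⁻¹) := by group
      _ = c * b := by rw [h1, h2]
  have hCbcard : (gclass c * {b}).ncard = Kc.index := by
    rw [Set.mul_singleton, Set.ncard_image_of_injective _ (mul_left_injective b),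
      ← Nat.card_coe_set_eq, hcardC]
  have hCleD : Kc.index ≤ (gclass (c * b)).ncard := by
    rw [← hCbcard]
    exact Set.ncard_le_ncard hCbD (Set.toFinite _)
  have hDnat : Nat.card (gclass (c * b)) = (gclass (c * b)).ncard :=
    Nat.card_coe_set_eq _
  have hDC : (gclass (c * b)).ncard = Kc.index := by
    rcases not_and_or.mp (hdist (c * b) (N.mul_mem hc hb)) with h | h
    · have hco := not_not.mp h
      rw [hcardB] at hco
      have hdvd : Nat.card (gclass (c * b)) ∣ Kc.index := hco.dvd_of_dvd_mul_left hDdvd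
      rw [hDnat] at hdvd
      exact Nat.le_antisymm (Nat.le_of_dvd hCpos hdvd) hCleD
    · exfalso
      have hco := not_not.mp h
      rw [hcardC] at hco
      have hdvd : Nat.card (gclass (c * b)) ∣ Hb.index := hco.dvd_of_dvd_mul_right hDdvd
      have h1 : Nat.card (gclass (c * b)) ≤ Hb.index := Nat.le_of_dvd hBpos hdvd
      have h2 : Kc.index ≤ Nat.card (gclass (c * b)) := by rw [hDnat]; exact hCleD
      have h3 := hlt
      rw [hcardB, hcardC] at h3
      omega
  have hDeq : gclass c * {b} = gclass (c * b) :=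
    Set.eq_of_subset_of_ncard_le hCbD (by rw [hDC, hCbcard])
  -- C·{x} = C·{b} for every x in the class of b
  have hxy : ∀ x ∈ gclass b, gclass c * {x} = gclass c * {b} := by
    rintro x ⟨g, rfl⟩
    have hsub : gclass c * {g * b * g⁻¹} ⊆ gclass c * {b} := by
      rintro w hw
      rw [Set.mul_singleton] at hw
      obtain ⟨z, hz, rfl⟩ := hw
      have hz' : g⁻¹ * z * g ∈ gclass c := by
        have h := gclass_conj hz g⁻¹
        rwa [inv_inv] at h
      have hmem : (g⁻¹ * z * g) * b ∈ gclass (c * b) := by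
        rw [← hDeq]
        exact Set.mul_mem_mul hz' rfl
      have hmem2 := gclass_conj hmem g
      rw [← hDeq] at hmem2
      have heq : z * (g * b * g⁻¹) = g * ((g⁻¹ * z * g) * b) * g⁻¹ := by group
      show z * (g * b * g⁻¹) ∈ gclass c * {b}
      rw [heq]
      exact hmem2
    refine Set.eq_of_subset_of_ncard_le hsub ?_
    rw [Set.mul_singleton, Set.mul_singleton,
      Set.ncard_image_of_injective _ (mul_left_injective _),
      Set.ncard_image_of_injective _ (mul_left_injective _)]
  set T : Set G := gclass b * (gclass b)⁻¹ with hT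
  have hgen : ∀ h ∈ T, ∀ z ∈ gclass c, z * h ∈ gclass c := by
    rintro h hh z hz
    obtain ⟨x, hx, u, hu, rfl⟩ := hh
    have hu' : u⁻¹ ∈ gclass b := Set.mem_inv.mp hu
    have h1 : z * x ∈ gclass c * {u⁻¹} := by
      rw [hxy u⁻¹ hu', ← hxy x hx]
      exact Set.mul_mem_mul hz rfl
    rw [Set.mul_singleton] at h1
    obtain ⟨z', hz', hzx⟩ := h1
    have hzx' : z' * u⁻¹ = z * x := hzx
    have hzz : z * (x * u) = z' := by
      calc z * (x * u) = (z * x) * u := by group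
        _ = (z' * u⁻¹) * u := by rw [hzx']
        _ = z' := by group
    rw [hzz]
    exact hz'
  have hp : ∀ h ∈ Subgroup.closure T, ∀ z ∈ gclass c, z * h ∈ gclass c := by
    intro h hh
    have hTT : T ∪ T⁻¹ = T := by
      rw [hT, mul_inv_rev, inv_inv, Set.union_self]
    have hh' : h ∈ Submonoid.closure T := by
      have hmem : h ∈ (Subgroup.closure T).toSubmonoid := hh
      rwa [Subgroup.closure_toSubmonoid, hTT] at hmem
    exact Submonoid.closure_induction (motive := fun x _ => ∀ z ∈ gclass c, z * x ∈ gclass c)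
      hgen (fun z hz => by simpa using hz)
      (fun x y _ _ px py z hz => by rw [← mul_assoc]; exact py _ (px z hz)) hh'
  have hC2 : gclass c * ↑(Subgroup.closure T) = gclass c := by
    ext z
    constructor
    · rintro ⟨u, hu, v, hv, rfl⟩
      exact hp v hv u hu
    · intro hz
      exact ⟨z, hz, 1, Subgroup.one_mem _, mul_one z⟩
  have hC1 : Subgroup.closure T ≤ Subgroup.closure (gclass c * (gclass c)⁻¹) := by
    rw [Subgroup.closure_le]
    intro h hh
    have hch : c * h ∈ gclass c := hp h (Subgroup.subset_closure hh) c (self_mem_gclass c)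
    have h1 : c⁻¹ * (c * h) * c ∈ gclass c := by
      have h2 := gclass_conj hch c⁻¹
      rwa [inv_inv] at h2
    apply Subgroup.subset_closure
    refine ⟨c⁻¹ * (c * h) * c, h1, c⁻¹, ?_, by group⟩
    rw [Set.mem_inv, inv_inv]
    exact self_mem_gclass c
  have hC3 : Nat.card (Subgroup.closure T) ∣ Nat.card (gclass c) := by
    set H := Subgroup.closure T with hH
    set t : Set (G ⧸ H) := QuotientGroup.mk '' gclass c with ht
    have hsat : gclass c = QuotientGroup.mk ⁻¹' t := by
      apply Set.Subset.antisymm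
      · exact Set.subset_preimage_image _ _
      · rintro z hz
        obtain ⟨z', hz', hzz⟩ := hz
        have hmem : z'⁻¹ * z ∈ H := QuotientGroup.eq.mp hzz
        have h2 := hp _ hmem z' hz'
        simpa using h2
    have hcard : Nat.card (gclass c) = Nat.card H * Nat.card t := by
      calc Nat.card (gclass c) = Nat.card (QuotientGroup.mk ⁻¹' t : Set G) := by rw [← hsat]
        _ = Nat.card (↥H × ↥t) :=
          Nat.card_congr (QuotientGroup.preimageMkEquivSubgroupProdSet H t)
        _ = Nat.card H * Nat.card t := Nat.card_prod _ _
    exact ⟨Nat.card t, hcard⟩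
  exact ⟨hC1, hC2, hC3⟩
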